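/- arXiv:2512.12750 — 2 statements merged into one kernel-verified Lean document; each statement's English description precedes it below -/
import Mathlib

section
/- Let w : [0,∞) → [0,1] be non-increasing and right-continuous, κ ∈ ℝ, η ∈ (0,n), and x₁,...,xₙ ∈ ℝ. Define α̂ := inf{α > 0 : ∑ᵢ w(α|xᵢ-κ|) ≤ n-η}, assumed positive and finite. Suppose that α̂ is a discontinuity point of α ↦ w(α|xᵢ - κ|) for at most one index i ∈ {1,...,n}. Then ∑_{i=1}^n w(α̂|xᵢ - κ|) ≥ n - η - 1. -/
open Finset

/-- Lower bound `∑ᵢ w(α̂|xᵢ-κ|) ≥ n - η - 1` when `α̂` is a discontinuity of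
`α ↦ w(α|xᵢ-κ|)` for at most one index. -/
theorem sum_weights_at_alphaHat_ge (n : ℕ) (w : ℝ → ℝ)
    (hw : ∀ t, 0 ≤ t → w t ∈ Set.Icc (0:ℝ) 1) (hmono : AntitoneOn w (Set.Ici 0))
    (hrc : ∀ t, 0 ≤ t → ContinuousWithinAt w (Set.Ici t) t)
    (κ η : ℝ) (hη : 0 < η) (hηn : η < n) (x : Fin n → ℝ)
    (αhat : ℝ)
    (hαhat : αhat = sInf {α : ℝ | 0 < α ∧ ∑ i, w (α * |x i - κ|) ≤ (n : ℝ) - η})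
    (hpos : 0 < αhat)
    (hdisc : {i : Fin n | ¬ ContinuousAt (fun α : ℝ => w (α * |x i - κ|)) αhat}.Subsingleton) :
    (n : ℝ) - η - 1 ≤ ∑ i, w (αhat * |x i - κ|) := by
  have hn : 0 < n := by
    have : (0:ℝ) < n := hη.trans hηn
    exact_mod_cast this
  -- choose the (at most one) discontinuous index, or a default
  obtain ⟨j, hj⟩ : ∃ j : Fin n, ∀ i : Fin n,
      ¬ ContinuousAt (fun α : ℝ => w (α * |x i - κ|)) αhat → i = j := by
    by_cases h : ({i : Fin n | ¬ ContinuousAt (fun α : ℝ => w (α * |x i - κ|)) αhat}).Nonempty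
    · obtain ⟨k, hk⟩ := h
      exact ⟨k, fun i hi => hdisc hi hk⟩
    · exact ⟨⟨0, hn⟩, fun i hi => absurd ⟨i, hi⟩ h⟩
  -- for 0 < α < αhat, the full sum exceeds n - η
  have hkey : ∀ α : ℝ, 0 < α → α < αhat → (n:ℝ) - η < ∑ i, w (α * |x i - κ|) := by
    intro α hα hαlt
    by_contra hle
    push_neg at hle
    have hmem : α ∈ {α : ℝ | 0 < α ∧ ∑ i, w (α * |x i - κ|) ≤ (n : ℝ) - η} := ⟨hα, hle⟩
    have : αhat ≤ α := by
      rw [hαhat]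
      exact csInf_le ⟨0, fun b hb => hb.1.le⟩ hmem
    linarith
  -- each weight is in [0,1] for α ≥ 0
  have hwv : ∀ (α : ℝ), 0 ≤ α → ∀ i : Fin n, w (α * |x i - κ|) ∈ Set.Icc (0:ℝ) 1 := by
    intro α hα i
    exact hw _ (mul_nonneg hα (abs_nonneg _))
  -- the sum over i ≠ j tends to its value at αhat along 𝓝[<] αhat
  have htends : Filter.Tendsto (fun α : ℝ => ∑ i ∈ Finset.univ.erase j, w (α * |x i - κ|))
      (nhdsWithin αhat (Set.Iio αhat))
      (nhds (∑ i ∈ Finset.univ.erase j, w (αhat * |x i - κ|))) := by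
    apply tendsto_finset_sum
    intro i hi
    have hij : i ≠ j := Finset.ne_of_mem_erase hi
    have hcont : ContinuousAt (fun α : ℝ => w (α * |x i - κ|)) αhat := by
      by_contra hc
      exact hij (hj i hc)
    exact hcont.tendsto.mono_left nhdsWithin_le_nhds
  -- eventually-lower bound along 𝓝[<] αhat
  have hev : ∀ᶠ α in nhdsWithin αhat (Set.Iio αhat),
      (n:ℝ) - η - 1 ≤ ∑ i ∈ Finset.univ.erase j, w (α * |x i - κ|) := by
    have h1 : ∀ᶠ α in nhdsWithin αhat (Set.Iio αhat), α ∈ Set.Iio αhat :=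
      self_mem_nhdsWithin
    have h2 : ∀ᶠ α in nhdsWithin αhat (Set.Iio αhat), 0 < α :=
      (eventually_gt_nhds hpos).filter_mono nhdsWithin_le_nhds
    filter_upwards [h1, h2] with α hαlt hα
    have hsum := hkey α hα hαlt
    have hsplit : ∑ i, w (α * |x i - κ|)
        = w (α * |x j - κ|) + ∑ i ∈ Finset.univ.erase j, w (α * |x i - κ|) :=
      (Finset.add_sum_erase _ _ (Finset.mem_univ j)).symm
    have hj1 : w (α * |x j - κ|) ≤ 1 := (hwv α hα.le j).2
    linarith
  have hne : (nhdsWithin αhat (Set.Iio αhat)).NeBot := by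
    infer_instance
  have hlim : (n:ℝ) - η - 1 ≤ ∑ i ∈ Finset.univ.erase j, w (αhat * |x i - κ|) :=
    ge_of_tendsto htends hev
  have hj0 : 0 ≤ w (αhat * |x j - κ|) := (hwv αhat hpos.le j).1
  have hsplit : ∑ i, w (αhat * |x i - κ|)
      = w (αhat * |x j - κ|) + ∑ i ∈ Finset.univ.erase j, w (αhat * |x i - κ|) :=
    (Finset.add_sum_erase _ _ (Finset.mem_univ j)).symm
  linarith
end

section
/- Let w : [0,∞) → [0,1], κ ∈ ℝ, α, α' > 0, and x₁,...,xₙ, y₁,...,yₙ ∈ ℝ with xᵢ ≠ yᵢ for at most ⌊nε⌋ indices, ε ∈ [0,1]. Define m(β) = sup_{x∈ℝ} |x| w(β|x|) and assume m(α), m(α') < ∞. Then |(1/n)∑ᵢ (xᵢ - κ) w(α|xᵢ - κ|) - (1/n)∑ᵢ (yᵢ - κ) w(α'|yᵢ - κ|)| ≤ (ε + (2n - ∑ᵢ w(α'|yᵢ-κ|) - ∑ᵢ w(α|xᵢ-κ|))/n) · (m(α) + m(α')). -/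
open Finset

/-- Deterministic contamination-error bound (Lemma 3.6). -/
theorem contamination_error_bound (n : ℕ) (hn : 0 < n) (w : ℝ → ℝ)
    (hw : ∀ t, 0 ≤ t → w t ∈ Set.Icc (0:ℝ) 1)
    (κ α α' : ℝ) (hα : 0 < α) (hα' : 0 < α') (ε : ℝ) (hε : ε ∈ Set.Icc (0:ℝ) 1)
    (x y : Fin n → ℝ)
    (hdiff : (Finset.univ.filter fun i => x i ≠ y i).card ≤ Nat.floor ((n : ℝ) * ε))
    (Mα Mα' : ℝ)
    (hMα : IsLUB {s : ℝ | ∃ z : ℝ, s = |z| * w (α * |z|)} Mα)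
    (hMα' : IsLUB {s : ℝ | ∃ z : ℝ, s = |z| * w (α' * |z|)} Mα') :
    |(1 / n : ℝ) * ∑ i, (x i - κ) * w (α * |x i - κ|)
        - (1 / n : ℝ) * ∑ i, (y i - κ) * w (α' * |y i - κ|)|
      ≤ (ε + (2 * n - ∑ i, w (α' * |y i - κ|) - ∑ i, w (α * |x i - κ|)) / n)
          * (Mα + Mα') := by
  obtain ⟨hεl, hεr⟩ := hε
  have key1 : ∀ z : ℝ, |z| * w (α * |z|) ≤ Mα := fun z => hMα.1 ⟨z, rfl⟩
  have key2 : ∀ z : ℝ, |z| * w (α' * |z|) ≤ Mα' := fun z => hMα'.1 ⟨z, rfl⟩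
  have hM0 : 0 ≤ Mα := by have := key1 0; simpa using this
  have hM0' : 0 ≤ Mα' := by have := key2 0; simpa using this
  have hwb : ∀ i, w (α * |x i - κ|) ∈ Set.Icc (0:ℝ) 1 := fun i => hw _ (by positivity)
  have hwb' : ∀ i, w (α' * |y i - κ|) ∈ Set.Icc (0:ℝ) 1 := fun i => hw _ (by positivity)
  set A : Fin n → ℝ := fun i => (x i - κ) * w (α * |x i - κ|) with hA
  set B : Fin n → ℝ := fun i => (y i - κ) * w (α' * |y i - κ|) with hB
  have hterm : ∀ i, |A i - B i| ≤ (if x i = y i then 0 else Mα + Mα')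
      + Mα * (1 - w (α' * |y i - κ|)) + Mα' * (1 - w (α * |x i - κ|)) := by
    intro i
    obtain ⟨h1, h2⟩ := hwb i
    obtain ⟨h1', h2'⟩ := hwb' i
    by_cases hxy : x i = y i
    · have hz : A i - B i = (y i - κ) * (w (α * |y i - κ|) - w (α' * |y i - κ|)) := by
        simp only [hA, hB, hxy]; ring
      rw [hxy] at h1 h2 ⊢
      rw [if_pos rfl, hz, abs_mul]
      have hk1 := key1 (y i - κ)
      have hk2 := key2 (y i - κ)
      have habs : |w (α * |y i - κ|) - w (α' * |y i - κ|)|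
          ≤ w (α * |y i - κ|) * (1 - w (α' * |y i - κ|))
            + w (α' * |y i - κ|) * (1 - w (α * |y i - κ|)) := by
        rw [abs_sub_le_iff]
        constructor <;> nlinarith
      calc |y i - κ| * |w (α * |y i - κ|) - w (α' * |y i - κ|)|
          ≤ |y i - κ| * (w (α * |y i - κ|) * (1 - w (α' * |y i - κ|))
              + w (α' * |y i - κ|) * (1 - w (α * |y i - κ|))) :=
            mul_le_mul_of_nonneg_left habs (abs_nonneg _)
        _ = (|y i - κ| * w (α * |y i - κ|)) * (1 - w (α' * |y i - κ|))
            + (|y i - κ| * w (α' * |y i - κ|)) * (1 - w (α * |y i - κ|)) := by ring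
        _ ≤ Mα * (1 - w (α' * |y i - κ|)) + Mα' * (1 - w (α * |y i - κ|)) := by
            have e1 : (|y i - κ| * w (α * |y i - κ|)) * (1 - w (α' * |y i - κ|))
                ≤ Mα * (1 - w (α' * |y i - κ|)) :=
              mul_le_mul_of_nonneg_right hk1 (by linarith)
            have e2 : (|y i - κ| * w (α' * |y i - κ|)) * (1 - w (α * |y i - κ|))
                ≤ Mα' * (1 - w (α * |y i - κ|)) :=
              mul_le_mul_of_nonneg_right hk2 (by linarith)
            linarith
        _ ≤ _ := by linarith
    · rw [if_neg hxy]
      have hA1 : |A i| ≤ Mα := by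
        rw [hA]; rw [abs_mul, abs_of_nonneg h1]; exact key1 _
      have hB1 : |B i| ≤ Mα' := by
        rw [hB]; rw [abs_mul, abs_of_nonneg h1']; exact key2 _
      have := abs_sub (A i) (B i)
      nlinarith [abs_sub_abs_le_abs_sub (A i) (B i), abs_sub (A i) (B i)]
  have habs_sum : |∑ i, A i - ∑ i, B i| ≤ ∑ i, |A i - B i| := by
    rw [← Finset.sum_sub_distrib]
    exact Finset.abs_sum_le_sum_abs _ _
  have hsum_term : ∑ i, |A i - B i|
      ≤ ((Finset.univ.filter fun i => x i ≠ y i).card : ℝ) * (Mα + Mα')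
        + Mα * ((n : ℝ) - ∑ i, w (α' * |y i - κ|))
        + Mα' * ((n : ℝ) - ∑ i, w (α * |x i - κ|)) := by
    calc ∑ i, |A i - B i|
        ≤ ∑ i, ((if x i = y i then 0 else Mα + Mα')
            + Mα * (1 - w (α' * |y i - κ|)) + Mα' * (1 - w (α * |x i - κ|))) :=
          Finset.sum_le_sum fun i _ => hterm i
      _ = (∑ i, if x i = y i then (0:ℝ) else Mα + Mα')
          + Mα * ((n : ℝ) - ∑ i, w (α' * |y i - κ|))
          + Mα' * ((n : ℝ) - ∑ i, w (α * |x i - κ|)) := by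
          have e1 : ∑ i : Fin n, Mα * (1 - w (α' * |y i - κ|))
              = Mα * ((n : ℝ) - ∑ i, w (α' * |y i - κ|)) := by
            rw [← Finset.mul_sum, Finset.sum_sub_distrib]; simp
          have e2 : ∑ i : Fin n, Mα' * (1 - w (α * |x i - κ|))
              = Mα' * ((n : ℝ) - ∑ i, w (α * |x i - κ|)) := by
            rw [← Finset.mul_sum, Finset.sum_sub_distrib]; simp
          rw [Finset.sum_add_distrib, Finset.sum_add_distrib, e1, e2]
      _ = ((Finset.univ.filter fun i => x i ≠ y i).card : ℝ) * (Mα + Mα')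
          + Mα * ((n : ℝ) - ∑ i, w (α' * |y i - κ|))
          + Mα' * ((n : ℝ) - ∑ i, w (α * |x i - κ|)) := by
          congr 2
          rw [Finset.sum_ite, Finset.sum_const, Finset.sum_const]
          simp only [nsmul_eq_mul, Finset.sum_const, smul_zero, zero_add]
  have hcard : ((Finset.univ.filter fun i => x i ≠ y i).card : ℝ) ≤ (n : ℝ) * ε := by
    calc ((Finset.univ.filter fun i => x i ≠ y i).card : ℝ)
        ≤ (Nat.floor ((n : ℝ) * ε) : ℝ) := by exact_mod_cast hdiff
      _ ≤ (n : ℝ) * ε := Nat.floor_le (by positivity)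
  have hws : ∑ i, w (α * |x i - κ|) ≤ (n : ℝ) := by
    calc ∑ i, w (α * |x i - κ|) ≤ ∑ i : Fin n, (1:ℝ) :=
        Finset.sum_le_sum fun i _ => (hwb i).2
      _ = (n : ℝ) := by simp
  have hws' : ∑ i, w (α' * |y i - κ|) ≤ (n : ℝ) := by
    calc ∑ i, w (α' * |y i - κ|) ≤ ∑ i : Fin n, (1:ℝ) :=
        Finset.sum_le_sum fun i _ => (hwb' i).2
      _ = (n : ℝ) := by simp
  have hws0 : 0 ≤ ∑ i, w (α * |x i - κ|) :=
    Finset.sum_nonneg fun i _ => (hwb i).1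
  have hws0' : 0 ≤ ∑ i, w (α' * |y i - κ|) :=
    Finset.sum_nonneg fun i _ => (hwb' i).1
  have hn' : (0:ℝ) < n := by exact_mod_cast hn
  have hmain : |(1 / n : ℝ) * ∑ i, A i - (1 / n : ℝ) * ∑ i, B i|
      = (1 / n : ℝ) * |∑ i, A i - ∑ i, B i| := by
    rw [← mul_sub, abs_mul, abs_of_nonneg (by positivity : (0:ℝ) ≤ 1 / (n:ℝ))]
  rw [hmain]
  have hstep : (1 / n : ℝ) * |∑ i, A i - ∑ i, B i|
      ≤ (1 / n : ℝ) * ((n : ℝ) * ε * (Mα + Mα')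
        + Mα * ((n : ℝ) - ∑ i, w (α' * |y i - κ|))
        + Mα' * ((n : ℝ) - ∑ i, w (α * |x i - κ|))) := by
    apply mul_le_mul_of_nonneg_left _ (by positivity)
    refine habs_sum.trans (hsum_term.trans ?_)
    have : ((Finset.univ.filter fun i => x i ≠ y i).card : ℝ) * (Mα + Mα')
        ≤ (n : ℝ) * ε * (Mα + Mα') :=
      mul_le_mul_of_nonneg_right hcard (by linarith)
    linarith
  refine hstep.trans ?_
  have hne : (n : ℝ) ≠ 0 := ne_of_gt hn'
  have hrw : (ε + (2 * (n:ℝ) - ∑ i, w (α' * |y i - κ|) - ∑ i, w (α * |x i - κ|)) / n)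
      * (Mα + Mα')
      = (1 / n : ℝ) * (((n:ℝ) * ε + (2 * (n:ℝ) - ∑ i, w (α' * |y i - κ|)
          - ∑ i, w (α * |x i - κ|))) * (Mα + Mα')) := by
    field_simp
    try simp
  rw [hrw]
  refine mul_le_mul_of_nonneg_left ?_ (by positivity)
  nlinarith [hws, hws', hM0, hM0']
end
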